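/- Let φ* ∈ (0, π/2) and η > 0. Then J := ∫₀^{2φ*} (cos σ + tan φ*·sin σ)^{1+η} · sin σ · exp(−σ η tan φ*) dσ ≤ 2/η. -/

import Mathlib

open Real Set

theorem J_bound (φ η : ℝ) (hφ : φ ∈ Ioo 0 (π / 2)) (hη : 0 < η) :
    (∫ σ in (0 : ℝ)..(2 * φ),
        (Real.cos σ + Real.tan φ * Real.sin σ) ^ (1 + η) * Real.sin σ *
          Real.exp (-σ * η * Real.tan φ))
      ≤ 2 / η := by
  obtain ⟨hφ0, hφ2⟩ := hφ
  set t := Real.tan φ with ht_def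
  have hcosφ : 0 < Real.cos φ := Real.cos_pos_of_mem_Ioo ⟨by linarith [Real.pi_pos], hφ2⟩
  have ht : 0 < t := Real.tan_pos_of_pos_of_lt_pi_div_two hφ0 hφ2
  set b : ℝ → ℝ := fun σ => Real.cos σ + t * Real.sin σ with hb_def
  have hbcos : ∀ σ, b σ * Real.cos φ = Real.cos (σ - φ) := by
    intro σ
    rw [Real.cos_sub, hb_def, ht_def, Real.tan_eq_sin_div_cos]
    field_simp
  have hbpos : ∀ σ ∈ Icc (0:ℝ) (2*φ), 0 < b σ := by
    intro σ hσ
    have h1 : 0 < Real.cos (σ - φ) := by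
      apply Real.cos_pos_of_mem_Ioo
      constructor <;> [linarith [hσ.1]; linarith [hσ.2]]
    have := hbcos σ
    nlinarith
  have hsin : ∀ σ ∈ Icc (0:ℝ) (2*φ), 0 ≤ Real.sin σ := by
    intro σ hσ
    apply Real.sin_nonneg_of_nonneg_of_le_pi hσ.1
    linarith [Real.pi_pos, hσ.2]
  have hbsq : ∀ σ ∈ Icc (0:ℝ) (2*φ), b σ ^ 2 ≤ 1 + t^2 := by
    intro σ hσ
    have h1 : Real.cos (σ - φ) ^ 2 ≤ 1 := Real.cos_sq_le_one _
    have h2 : (1 + t ^ 2)⁻¹ = Real.cos φ ^ 2 := Real.inv_one_add_tan_sq (ne_of_gt hcosφ)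
    have h3 := hbcos σ
    have h4 : b σ ^ 2 * Real.cos φ ^ 2 = Real.cos (σ - φ) ^ 2 := by rw [← h3]; ring
    have h5 : (0:ℝ) < 1 + t ^ 2 := by positivity
    rw [← h2] at h4
    rw [← mul_le_mul_iff_left₀ (inv_pos.mpr h5), mul_inv_cancel₀ (ne_of_gt h5)]
    linarith
  set H : ℝ → ℝ := fun σ => σ * t - Real.log (b σ) with hH_def
  set g : ℝ → ℝ := fun σ => -Real.exp (-η * H σ) / η with hg_def
  set g' : ℝ → ℝ := fun σ => Real.exp (-η * H σ) * ((1 + t^2) * Real.sin σ / b σ) with hg'_def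
  have hφ2pos : (0:ℝ) ≤ 2 * φ := by linarith
  have hηne : η ≠ 0 := ne_of_gt hη
  have hderivH : ∀ σ ∈ Icc (0:ℝ) (2*φ), HasDerivAt H ((1 + t^2) * Real.sin σ / b σ) σ := by
    intro σ hσ
    have hb := hbpos σ hσ
    have h1 : HasDerivAt b (-Real.sin σ + t * Real.cos σ) σ := by
      exact (Real.hasDerivAt_cos σ).add ((Real.hasDerivAt_sin σ).const_mul t)
    have h2 : HasDerivAt (fun σ => Real.log (b σ)) ((-Real.sin σ + t * Real.cos σ) / b σ) σ :=
      h1.log (ne_of_gt hb)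
    have h3 : HasDerivAt (fun σ : ℝ => σ * t) t σ := by
      simpa using (hasDerivAt_id σ).mul_const t
    have h4 := h3.sub h2
    refine h4.congr_deriv ?_; symm
    rw [eq_sub_iff_add_eq, ← add_div, div_eq_iff (ne_of_gt hb)]
    simp only [hb_def]
    ring
  have hderivg : ∀ σ ∈ Icc (0:ℝ) (2*φ), HasDerivAt g (g' σ) σ := by
    intro σ hσ
    have h1 : HasDerivAt (fun σ => -η * H σ) (-η * ((1 + t^2) * Real.sin σ / b σ)) σ :=
      (hderivH σ hσ).const_mul (-η)
    have h2 := (h1.exp.neg).div_const η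
    refine h2.congr_deriv ?_; symm
    rw [hg'_def, eq_div_iff hηne]
    ring
  have hbcont : Continuous b := Real.continuous_cos.add (continuous_const.mul Real.continuous_sin)
  have hHcont : ContinuousOn H (Icc 0 (2*φ)) := by
    apply ContinuousOn.sub (Continuous.continuousOn (continuous_id.mul continuous_const))
    exact ContinuousOn.log hbcont.continuousOn (fun σ hσ => ne_of_gt (hbpos σ hσ))
  have hcont_g' : ContinuousOn g' (Icc 0 (2*φ)) := by
    apply ContinuousOn.mul
    · exact Real.continuous_exp.comp_continuousOn (continuousOn_const.mul hHcont)
    · exact ContinuousOn.div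
        (Continuous.continuousOn (continuous_const.mul Real.continuous_sin))
        hbcont.continuousOn (fun σ hσ => ne_of_gt (hbpos σ hσ))
  have hcont_f : ContinuousOn
      (fun σ => b σ ^ (1 + η) * Real.sin σ * Real.exp (-σ * η * t)) (Icc 0 (2*φ)) := by
    apply ContinuousOn.mul
    apply ContinuousOn.mul
    · exact ContinuousOn.rpow_const hbcont.continuousOn
        (fun σ hσ => Or.inr (by linarith))
    · exact Real.continuous_sin.continuousOn
    · exact (Real.continuous_exp.comp
        ((continuous_id.neg.mul continuous_const).mul continuous_const)).continuousOn
  have hint_f : IntervalIntegrable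
      (fun σ => b σ ^ (1 + η) * Real.sin σ * Real.exp (-σ * η * t))
      MeasureTheory.volume 0 (2*φ) := hcont_f.intervalIntegrable_of_Icc hφ2pos
  have hint_g' : IntervalIntegrable g' MeasureTheory.volume 0 (2*φ) :=
    hcont_g'.intervalIntegrable_of_Icc hφ2pos
  have hptwise : ∀ σ ∈ Icc (0:ℝ) (2*φ),
      b σ ^ (1 + η) * Real.sin σ * Real.exp (-σ * η * t) ≤ g' σ := by
    intro σ hσ
    have hb := hbpos σ hσ
    have hs := hsin σ hσ
    have hsq := hbsq σ hσ
    have hE : (0:ℝ) < Real.exp (-σ * η * t) := Real.exp_pos _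
    have hrw : Real.exp (-η * H σ) = Real.exp (-σ * η * t) * b σ ^ η := by
      rw [hH_def, Real.rpow_def_of_pos hb, ← Real.exp_add]
      ring_nf
    simp only [hg'_def]
    rw [hrw]
    have hbη : (0:ℝ) < b σ ^ η := Real.rpow_pos_of_pos hb η
    have h1 : b σ ^ (1 + η) = b σ * b σ ^ η := by
      rw [Real.rpow_add hb, Real.rpow_one]
    rw [h1]
    have hkey : b σ * Real.sin σ ≤ (1 + t^2) * Real.sin σ / b σ := by
      rw [le_div_iff₀ hb]
      nlinarith
    calc b σ * b σ ^ η * Real.sin σ * Real.exp (-σ * η * t)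
        = (b σ * Real.sin σ) * (b σ ^ η * Real.exp (-σ * η * t)) := by ring
      _ ≤ ((1 + t^2) * Real.sin σ / b σ) * (b σ ^ η * Real.exp (-σ * η * t)) := by
          apply mul_le_mul_of_nonneg_right hkey; positivity
      _ = Real.exp (-σ * η * t) * b σ ^ η * ((1 + t^2) * Real.sin σ / b σ) := by ring
  have hmono : (∫ σ in (0:ℝ)..(2*φ),
      b σ ^ (1 + η) * Real.sin σ * Real.exp (-σ * η * t))
      ≤ ∫ σ in (0:ℝ)..(2*φ), g' σ :=
    intervalIntegral.integral_mono_on hφ2pos hint_f hint_g' hptwise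
  have hftc : (∫ σ in (0:ℝ)..(2*φ), g' σ) = g (2*φ) - g 0 := by
    apply intervalIntegral.integral_eq_sub_of_hasDerivAt
    · intro σ hσ
      rw [uIcc_of_le hφ2pos] at hσ
      exact hderivg σ hσ
    · exact hint_g'
  have hg0 : g 0 = -1 / η := by
    simp [hg_def, hH_def, hb_def]
  have hgend : g (2*φ) ≤ 0 := by
    rw [hg_def]
    have := Real.exp_pos (-η * H (2*φ))
    simp only
    have h := Real.exp_pos (-η * H (2*φ))
    exact div_nonpos_of_nonpos_of_nonneg (by linarith) (le_of_lt hη)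
  calc (∫ σ in (0:ℝ)..(2*φ),
      b σ ^ (1 + η) * Real.sin σ * Real.exp (-σ * η * t))
      ≤ g (2*φ) - g 0 := by rw [← hftc]; exact hmono
    _ ≤ 0 - (-1/η) := by rw [hg0]; linarith
    _ ≤ 2 / η := by
        rw [zero_sub, show -(-1/η) = 1/η by ring, div_le_div_iff₀ hη hη]
        nlinarith
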